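/- Let X ~ Binomial(n, 1/2) and Y ~ Binomial(m, 1/2) be independent. Then for every λ with |λ| ≤ 2/sqrt(nm), E[exp(λ·(X − n/2)·(Y − m/2))] ≤ exp(5·n·m·λ²/32). -/

import Mathlib

open MeasureTheory
open Real Finset Nat


open Real Finset Nat
lemma aux_fact (k : ℕ) : (2*k)! ≤ (2*k)^k * k ! := by
  have h := Nat.factorial_mul_descFactorial (show k ≤ 2*k by omega)
  rw [show 2*k - k = k by omega] at h
  calc (2*k)! = k ! * (2*k).descFactorial k := h.symm
  _ ≤ k ! * (2*k)^k := Nat.mul_le_mul_left _ (Nat.descFactorial_le_pow _ _)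
  _ = (2*k)^k * k ! := Nat.mul_comm _ _

lemma aux_cosh (x : ℝ) (k : ℕ) : x^(2*k) / (2*k)! ≤ Real.cosh x :=
  le_hasSum (Real.hasSum_cosh x) k (fun j _ =>
    div_nonneg (by rw [pow_mul]; positivity) (by positivity))

lemma binom_mgf_eq (n : ℕ) (t : ℝ) :
    ∑ j ∈ Finset.range (n+1), (n.choose j : ℝ) * (1/2)^n * Real.exp (t * ((j:ℝ) - n/2))
      = Real.cosh (t/2) ^ n := by
  have hc : Real.cosh (t/2) = (Real.exp t + 1) * (Real.exp (-(t/2)) / 2) := by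
    have h1 : Real.exp t * Real.exp (-(t/2)) = Real.exp (t/2) := by
      rw [← Real.exp_add]; congr 1; ring
    have h2 : (Real.exp t + 1) * (Real.exp (-(t/2)) / 2)
        = (Real.exp t * Real.exp (-(t/2)) + Real.exp (-(t/2)))/2 := by ring
    rw [Real.cosh_eq, h2, h1]
  rw [hc, mul_pow, add_pow, Finset.sum_mul]
  refine Finset.sum_congr rfl fun j hj => ?_
  rw [show t * ((j:ℝ) - (n:ℝ)/2) = (j:ℝ)*t + (n:ℝ)*(-(t/2)) by ring, Real.exp_add,
    one_pow, div_pow, div_pow, one_pow, ← Real.exp_nat_mul, ← Real.exp_nat_mul]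
  ring

lemma binom_mgf_le (n : ℕ) (t : ℝ) :
    ∑ j ∈ Finset.range (n+1), (n.choose j : ℝ) * (1/2)^n * Real.exp (t * ((j:ℝ) - n/2))
      ≤ Real.exp (t^2 * n / 8) := by
  rw [binom_mgf_eq]
  calc Real.cosh (t/2) ^ n ≤ (Real.exp ((t/2)^2/2))^n :=
        pow_le_pow_left₀ (Real.cosh_pos (x := t/2)).le (Real.cosh_le_exp_half_sq _) n
  _ = Real.exp (t^2 * n / 8) := by
      rw [← Real.exp_nat_mul]; congr 1; ring

lemma binom_cosh_eq (n : ℕ) (t : ℝ) :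
    ∑ j ∈ Finset.range (n+1), (n.choose j : ℝ) * (1/2)^n * Real.cosh (t * ((j:ℝ) - n/2))
      = Real.cosh (t/2) ^ n := by
  have h2 : ∀ x : ℝ, Real.cosh x = (Real.exp x + Real.exp (-x))/2 := Real.cosh_eq
  calc ∑ j ∈ Finset.range (n+1), (n.choose j : ℝ) * (1/2)^n * Real.cosh (t * ((j:ℝ) - n/2))
      = (∑ j ∈ Finset.range (n+1), (n.choose j : ℝ) * (1/2)^n * Real.exp (t * ((j:ℝ) - n/2))
        + ∑ j ∈ Finset.range (n+1), (n.choose j : ℝ) * (1/2)^n * Real.exp ((-t) * ((j:ℝ) - n/2)))/2 := by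
        rw [← Finset.sum_add_distrib, Finset.sum_div]
        refine Finset.sum_congr rfl fun j hj => ?_
        rw [h2, show (-t) * ((j:ℝ) - n/2) = -(t * ((j:ℝ) - n/2)) by ring]
        ring
  _ = Real.cosh (t/2) ^ n := by
        rw [binom_mgf_eq, binom_mgf_eq, show (-t)/2 = -(t/2) by ring, Real.cosh_neg]
        ring

lemma binom_moment (n k : ℕ) (hn : 1 ≤ n) (hk : 1 ≤ k) :
    ∑ j ∈ Finset.range (n+1), (n.choose j : ℝ) * (1/2)^n * ((j:ℝ) - n/2)^(2*k)
      ≤ (2*k)! * Real.exp k * ((n:ℝ)/(8*k))^k := by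
  set t : ℝ := Real.sqrt (8*k/n) with ht
  have hnpos : (0:ℝ) < n := by exact_mod_cast hn
  have hkpos : (0:ℝ) < k := by exact_mod_cast hk
  have ht2 : t^2 = 8*k/n := Real.sq_sqrt (by positivity)
  have htpos : 0 < t := Real.sqrt_pos.mpr (by positivity)
  have key : (∑ j ∈ Finset.range (n+1), (n.choose j : ℝ) * (1/2)^n * ((j:ℝ) - n/2)^(2*k))
      * (t^(2*k) / (2*k)!) ≤ Real.exp k := by
    calc (∑ j ∈ Finset.range (n+1), (n.choose j : ℝ) * (1/2)^n * ((j:ℝ) - n/2)^(2*k))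
        * (t^(2*k) / (2*k)!)
        = ∑ j ∈ Finset.range (n+1), (n.choose j : ℝ) * (1/2)^n
            * ((t * ((j:ℝ) - n/2))^(2*k) / (2*k)!) := by
          rw [Finset.sum_mul]
          refine Finset.sum_congr rfl fun j hj => ?_
          rw [mul_pow]; ring
    _ ≤ ∑ j ∈ Finset.range (n+1), (n.choose j : ℝ) * (1/2)^n
            * Real.cosh (t * ((j:ℝ) - n/2)) := by
          refine Finset.sum_le_sum fun j hj => ?_
          exact mul_le_mul_of_nonneg_left (aux_cosh _ _) (by positivity)
    _ = Real.cosh (t/2) ^ n := binom_cosh_eq n t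
    _ ≤ (Real.exp ((t/2)^2/2))^n :=
          pow_le_pow_left₀ (Real.cosh_pos (x := t/2)).le (Real.cosh_le_exp_half_sq _) n
    _ = Real.exp (t^2 * n / 8) := by rw [← Real.exp_nat_mul]; congr 1; ring
    _ = Real.exp k := by rw [ht2]; congr 1; field_simp
  have htk : t^(2*k) = ((8*k:ℝ)/n)^k := by rw [pow_mul, ht2]
  have h8 : ((n:ℝ)/(8*k))^k = (t^(2*k))⁻¹ := by
    rw [htk, ← inv_pow]; congr 1; rw [inv_div]
  rw [h8]
  have hq : (0:ℝ) < t^(2*k) / (2*k)! := by positivity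
  calc ∑ j ∈ Finset.range (n+1), (n.choose j : ℝ) * (1/2)^n * ((j:ℝ) - n/2)^(2*k)
      ≤ Real.exp k / (t^(2*k) / (2*k)!) := (le_div_iff₀ hq).mpr key
  _ = (2*k)! * Real.exp k * (t^(2*k))⁻¹ := by field_simp


lemma binom_sum_one (n : ℕ) : ∑ j ∈ Finset.range (n+1), ((n.choose j : ℝ) * (1/2)^n) = 1 := by
  rw [← Finset.sum_mul]
  have h : (∑ j ∈ Finset.range (n+1), (n.choose j : ℝ)) = 2^n := by
    exact_mod_cast congrArg (Nat.cast : ℕ → ℝ) (Nat.sum_range_choose n)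
  rw [h, one_div, inv_pow, mul_inv_cancel₀ (by positivity)]

lemma binom_subexp (n : ℕ) (hn : 1 ≤ n) (c : ℝ) (hc : 0 ≤ c) (hcn : c * n ≤ 1/2) :
    ∑ j ∈ Finset.range (n+1), (n.choose j : ℝ) * (1/2)^n * Real.exp (c * ((j:ℝ)-n/2)^2)
      ≤ Real.exp (5*n*c/4) := by
  have hnpos : (0:ℝ) < n := by exact_mod_cast hn
  set y : ℝ := Real.exp 1 * c * n / 4 with hy
  have hepos := Real.exp_pos 1
  have he9 := Real.exp_one_lt_d9
  have hy0 : 0 ≤ y := by positivity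
  have hy1 : y < 1 := by
    rw [hy]
    nlinarith [mul_le_mul_of_nonneg_left hcn hepos.le]
  have hexp : ∀ x : ℝ, Real.exp x = ∑' k : ℕ, x^k / k ! := fun x => by
    rw [Real.exp_eq_exp_ℝ, NormedSpace.exp_eq_tsum_div]
  have hsum : ∀ j ∈ Finset.range (n+1), Summable
      (fun k : ℕ => (n.choose j : ℝ) * (1/2)^n * ((c * ((j:ℝ)-n/2)^2)^k / k !)) :=
    fun j _ => (Real.summable_pow_div_factorial _).mul_left _
  have hgsum : Summable (fun k : ℕ => y^k) := summable_geometric_of_lt_one hy0 hy1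
  have hTsum : Summable (fun k : ℕ => ∑ j ∈ Finset.range (n+1),
      (n.choose j : ℝ) * (1/2)^n * ((c * ((j:ℝ)-n/2)^2)^k / k !)) := summable_sum hsum
  have hbound : ∀ k : ℕ, (∑ j ∈ Finset.range (n+1),
      (n.choose j : ℝ) * (1/2)^n * ((c * ((j:ℝ)-n/2)^2)^k / k !)) ≤ y^k := by
    intro k
    match k with
    | 0 =>
      simp only [pow_zero, Nat.factorial_zero, Nat.cast_one, div_one, mul_one]
      exact le_of_eq (binom_sum_one n)
    | (k+1) =>
      set K := k + 1 with hK
      have hKpos : (0:ℝ) < K := by positivity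
      have step1 : (∑ j ∈ Finset.range (n+1),
          (n.choose j : ℝ) * (1/2)^n * ((c * ((j:ℝ)-n/2)^2)^K / K !))
          = (c^K / K !) * ∑ j ∈ Finset.range (n+1),
            (n.choose j : ℝ) * (1/2)^n * ((j:ℝ)-n/2)^(2*K) := by
        rw [Finset.mul_sum]
        refine Finset.sum_congr rfl fun j hj => ?_
        rw [mul_pow, ← pow_mul]
        ring
      rw [step1]
      have hmom := binom_moment n K hn (by omega)
      have hfctr : ((2*K)! : ℝ) ≤ ((2*K : ℕ) : ℝ)^K * (K ! : ℝ) := by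
        exact_mod_cast aux_fact K
      have hexpK : Real.exp (K:ℝ) = (Real.exp 1)^K := by
        rw [← Real.exp_nat_mul, mul_one]
      calc (c^K / K !) * ∑ j ∈ Finset.range (n+1),
            (n.choose j : ℝ) * (1/2)^n * ((j:ℝ)-n/2)^(2*K)
          ≤ (c^K / K !) * ((2*K)! * Real.exp K * ((n:ℝ)/(8*K))^K) := by
            refine mul_le_mul_of_nonneg_left hmom (by positivity)
        _ ≤ (c^K / K !) * ((((2*K : ℕ):ℝ))^K * (K !) * Real.exp K * ((n:ℝ)/(8*K))^K) := by
            refine mul_le_mul_of_nonneg_left ?_ (by positivity)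
            refine mul_le_mul_of_nonneg_right (mul_le_mul_of_nonneg_right hfctr ?_) ?_
            · positivity
            · positivity
        _ = (c * (2*(K:ℝ)) * Real.exp 1 * ((n:ℝ)/(8*(K:ℝ))))^K := by
            have h2K : ((2*K : ℕ):ℝ) = 2*(K:ℝ) := by push_cast; ring
            have hsplit : (c * (2*(K:ℝ)) * Real.exp 1 * ((n:ℝ)/(8*(K:ℝ))))^K
                = c^K * (2*(K:ℝ))^K * (Real.exp 1)^K * ((n:ℝ)/(8*(K:ℝ)))^K := by
              rw [mul_pow, mul_pow, mul_pow]
            have hKfac : (K ! : ℝ) ≠ 0 := by positivity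
            rw [hexpK, h2K, hsplit]
            field_simp
        _ = y^K := by
            have : c * (2*(K:ℝ)) * Real.exp 1 * ((n:ℝ)/(8*(K:ℝ))) = y := by
              rw [hy]
              have : (K:ℝ) ≠ 0 := ne_of_gt hKpos
              field_simp
              ring
            rw [this]
  calc ∑ j ∈ Finset.range (n+1), (n.choose j : ℝ) * (1/2)^n * Real.exp (c * ((j:ℝ)-n/2)^2)
      = ∑ j ∈ Finset.range (n+1), ∑' k : ℕ,
          (n.choose j : ℝ) * (1/2)^n * ((c * ((j:ℝ)-n/2)^2)^k / k !) := by
        refine Finset.sum_congr rfl fun j hj => ?_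
        rw [hexp, ← tsum_mul_left]
  _ = ∑' k : ℕ, ∑ j ∈ Finset.range (n+1),
          (n.choose j : ℝ) * (1/2)^n * ((c * ((j:ℝ)-n/2)^2)^k / k !) := (Summable.tsum_finsetSum hsum).symm
  _ ≤ ∑' k : ℕ, y^k := Summable.tsum_le_tsum hbound hTsum hgsum
  _ = (1 - y)⁻¹ := tsum_geometric_of_lt_one hy0 hy1
  _ ≤ Real.exp (5*n*c/4) := by
      have h1 := Real.add_one_le_exp (5*n*c/4)
      have h2 : 0 < 1 - y := by linarith
      rw [inv_eq_one_div, div_le_iff₀ h2]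
      have h3 := mul_le_mul_of_nonneg_right h1 h2.le
      have hu : 0 ≤ c * n := by positivity
      nlinarith [h3, he9, hu, hcn, mul_nonneg hu hu]


theorem stmt_19 {Ω : Type*} [MeasurableSpace Ω] (μ : Measure Ω) [IsProbabilityMeasure μ]
    (n m : ℕ) (hn : 1 ≤ n) (hm : 1 ≤ m)
    (X Y : Ω → ℝ) (hXmeas : Measurable X) (hYmeas : Measurable Y)
    (hXlaw : ∀ k : ℕ, μ {ω | X ω = k} = ENNReal.ofReal ((n.choose k : ℝ) * (1 / 2) ^ n))
    (hYlaw : ∀ k : ℕ, μ {ω | Y ω = k} = ENNReal.ofReal ((m.choose k : ℝ) * (1 / 2) ^ m))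
    (hindep : ProbabilityTheory.IndepFun X Y μ) :
    ∀ lam : ℝ, |lam| ≤ 2 / Real.sqrt (n * m) →
      ∫ ω, Real.exp (lam * (X ω - n / 2) * (Y ω - m / 2)) ∂μ ≤
        Real.exp (5 * n * m * lam ^ 2 / 32) := by
  intro lam hlam
  classical
  have hnR : (0:ℝ) < n := by exact_mod_cast hn
  have hmR : (0:ℝ) < m := by exact_mod_cast hm
  have hnm : (0:ℝ) < (n:ℝ) * m := by positivity
  -- lam^2 bound
  have hlam2 : lam^2 * ((n:ℝ) * m) ≤ 4 := by
    have hs : 0 < Real.sqrt ((n:ℝ)*m) := Real.sqrt_pos.mpr hnm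
    have h1 : |lam| * Real.sqrt ((n:ℝ)*m) ≤ 2 := by
      rw [← le_div_iff₀ hs]
      exact_mod_cast hlam
    have h2 : (|lam| * Real.sqrt ((n:ℝ)*m))^2 ≤ 2^2 :=
      pow_le_pow_left₀ (by positivity) h1 2
    calc lam^2 * ((n:ℝ)*m) = (|lam| * Real.sqrt ((n:ℝ)*m))^2 := by
          rw [mul_pow, sq_abs, Real.sq_sqrt hnm.le]
    _ ≤ 4 := by linarith [h2]
  -- sets
  have hAmeas : ∀ j : ℕ, MeasurableSet (X ⁻¹' {(j:ℝ)}) :=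
    fun j => hXmeas (measurableSet_singleton _)
  have hBmeas : ∀ k : ℕ, MeasurableSet (Y ⁻¹' {(k:ℝ)}) :=
    fun k => hYmeas (measurableSet_singleton _)
  have hAlaw : ∀ j : ℕ, μ (X ⁻¹' {(j:ℝ)}) = ENNReal.ofReal ((n.choose j : ℝ) * (1/2)^n) :=
    fun j => hXlaw j
  have hBlaw : ∀ k : ℕ, μ (Y ⁻¹' {(k:ℝ)}) = ENNReal.ofReal ((m.choose k : ℝ) * (1/2)^m) :=
    fun k => hYlaw k
  -- full measure unions
  have hUnion : ∀ (N : ℕ) (Z : Ω → ℝ), Measurable Z →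
      (∀ k : ℕ, μ (Z ⁻¹' {(k:ℝ)}) = ENNReal.ofReal ((N.choose k : ℝ) * (1/2)^N)) →
      μ ((⋃ j ∈ Finset.range (N+1), Z ⁻¹' {(j:ℝ)})ᶜ) = 0 := by
    intro N Z hZ hlaw
    have hdis : (Finset.range (N+1) : Set ℕ).PairwiseDisjoint
        (fun j : ℕ => Z ⁻¹' {(j:ℝ)}) := by
      intro i _ j _ hij
      refine Set.disjoint_left.mpr fun ω hωi hωj => ?_
      apply hij
      exact_mod_cast (hωi.symm.trans hωj : ((i:ℝ)) = j)
    have hmeasb : μ (⋃ j ∈ Finset.range (N+1), Z ⁻¹' {(j:ℝ)}) = 1 := by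
      rw [measure_biUnion_finset hdis (fun j _ => hZ (measurableSet_singleton _))]
      have : ∀ j ∈ Finset.range (N+1), μ (Z ⁻¹' {(j:ℝ)})
          = ENNReal.ofReal ((N.choose j : ℝ) * (1/2)^N) := fun j _ => hlaw j
      rw [Finset.sum_congr rfl this,
        ← ENNReal.ofReal_sum_of_nonneg (fun j _ => by positivity), binom_sum_one N]
      exact ENNReal.ofReal_one
    rw [measure_compl (Finset.measurableSet_biUnion _
      (fun j _ => hZ (measurableSet_singleton _))) (measure_ne_top μ _), hmeasb, measure_univ,
      tsub_self]
  have hUc := hUnion n X hXmeas hAlaw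
  have hVc := hUnion m Y hYmeas hBlaw
  -- the simple function
  set F : Ω → ℝ := fun ω => ∑ j ∈ Finset.range (n+1), ∑ k ∈ Finset.range (m+1),
      Set.indicator ((X ⁻¹' {(j:ℝ)}) ∩ (Y ⁻¹' {(k:ℝ)}))
        (fun _ => Real.exp (lam * ((j:ℝ) - n/2) * ((k:ℝ) - m/2))) ω with hF
  have hpoint : ∀ ω, ω ∈ (⋃ j ∈ Finset.range (n+1), X ⁻¹' {(j:ℝ)}) →
      ω ∈ (⋃ k ∈ Finset.range (m+1), Y ⁻¹' {(k:ℝ)}) →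
      Real.exp (lam * (X ω - n / 2) * (Y ω - m / 2)) = F ω := by
    intro ω hωU hωV
    rw [Set.mem_iUnion₂] at hωU hωV
    obtain ⟨j₀, hj₀, hXω⟩ := hωU
    obtain ⟨k₀, hk₀, hYω⟩ := hωV
    have hXj : X ω = (j₀:ℝ) := hXω
    have hYk : Y ω = (k₀:ℝ) := hYω
    show _ = ∑ j ∈ Finset.range (n+1), ∑ k ∈ Finset.range (m+1),
      Set.indicator ((X ⁻¹' {(j:ℝ)}) ∩ (Y ⁻¹' {(k:ℝ)}))
        (fun _ => Real.exp (lam * ((j:ℝ) - n/2) * ((k:ℝ) - m/2))) ω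
    rw [Finset.sum_eq_single_of_mem j₀ hj₀ (fun j _ hne => Finset.sum_eq_zero fun k _ =>
      Set.indicator_of_notMem (fun hmem => hne (by
        have : (j:ℝ) = (j₀:ℝ) := (hmem.1 : X ω = (j:ℝ)).symm.trans hXj
        exact_mod_cast this)) _)]
    rw [Finset.sum_eq_single_of_mem k₀ hk₀ (fun k _ hne =>
      Set.indicator_of_notMem (fun hmem => hne (by
        have : (k:ℝ) = (k₀:ℝ) := (hmem.2 : Y ω = (k:ℝ)).symm.trans hYk
        exact_mod_cast this)) _)]
    rw [Set.indicator_of_mem (Set.mem_inter hXω hYω), hXj, hYk]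
  have hae : (fun ω => Real.exp (lam * (X ω - n / 2) * (Y ω - m / 2))) =ᵐ[μ] F := by
    rw [Filter.EventuallyEq, ae_iff]
    refine measure_mono_null ?_ (measure_union_null hUc hVc)
    intro ω hω
    rw [Set.mem_union, Set.mem_compl_iff, Set.mem_compl_iff]
    by_contra hcon
    push_neg at hcon
    exact hω (hpoint ω hcon.1 hcon.2)
  have hint : ∫ ω, Real.exp (lam * (X ω - n / 2) * (Y ω - m / 2)) ∂μ
      = ∑ j ∈ Finset.range (n+1), ∑ k ∈ Finset.range (m+1),
        ((n.choose j : ℝ) * (1/2)^n) * ((m.choose k : ℝ) * (1/2)^m)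
          * Real.exp (lam * ((j:ℝ) - n/2) * ((k:ℝ) - m/2)) := by
    rw [integral_congr_ae hae]
    show ∫ ω, ∑ j ∈ Finset.range (n+1), ∑ k ∈ Finset.range (m+1),
      Set.indicator ((X ⁻¹' {(j:ℝ)}) ∩ (Y ⁻¹' {(k:ℝ)}))
        (fun _ => Real.exp (lam * ((j:ℝ) - n/2) * ((k:ℝ) - m/2))) ω ∂μ = _
    rw [integral_finset_sum _ (fun j _ => integrable_finset_sum _ (fun k _ =>
      (integrable_const _).indicator ((hAmeas j).inter (hBmeas k))))]
    refine Finset.sum_congr rfl fun j _ => ?_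
    rw [integral_finset_sum _ (fun k _ =>
      (integrable_const _).indicator ((hAmeas j).inter (hBmeas k)))]
    refine Finset.sum_congr rfl fun k _ => ?_
    rw [integral_indicator_const _ ((hAmeas j).inter (hBmeas k))]
    have hμ : μ ((X ⁻¹' {(j:ℝ)}) ∩ (Y ⁻¹' {(k:ℝ)}))
        = ENNReal.ofReal ((n.choose j : ℝ) * (1/2)^n)
          * ENNReal.ofReal ((m.choose k : ℝ) * (1/2)^m) := by
      rw [hindep.measure_inter_preimage_eq_mul _ _ (measurableSet_singleton _)
        (measurableSet_singleton _), hAlaw, hBlaw]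
    rw [measureReal_def, hμ, smul_eq_mul, ENNReal.toReal_mul, ENNReal.toReal_ofReal (by positivity),
      ENNReal.toReal_ofReal (by positivity)]
  rw [hint]
  have hcn : (lam^2 * m / 8) * n ≤ 1/2 := by nlinarith [hlam2]
  calc ∑ j ∈ Finset.range (n+1), ∑ k ∈ Finset.range (m+1),
        ((n.choose j : ℝ)*(1/2)^n) * ((m.choose k : ℝ)*(1/2)^m)
          * Real.exp (lam * ((j:ℝ)-n/2) * ((k:ℝ)-m/2))
      = ∑ j ∈ Finset.range (n+1), ((n.choose j : ℝ)*(1/2)^n) *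
          (∑ k ∈ Finset.range (m+1), (m.choose k : ℝ)*(1/2)^m
            * Real.exp ((lam * ((j:ℝ)-n/2)) * ((k:ℝ)-m/2))) := by
        refine Finset.sum_congr rfl fun j _ => ?_
        rw [Finset.mul_sum]
        exact Finset.sum_congr rfl fun k _ => by ring
  _ ≤ ∑ j ∈ Finset.range (n+1), ((n.choose j : ℝ)*(1/2)^n)
        * Real.exp ((lam * ((j:ℝ)-n/2))^2 * m / 8) :=
        Finset.sum_le_sum fun j _ => mul_le_mul_of_nonneg_left (binom_mgf_le m _) (by positivity)
  _ = ∑ j ∈ Finset.range (n+1), ((n.choose j : ℝ)*(1/2)^n)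
        * Real.exp ((lam^2 * m / 8) * ((j:ℝ)-n/2)^2) := by
        refine Finset.sum_congr rfl fun j _ => ?_
        congr 1
        ring
  _ ≤ Real.exp (5*n*(lam^2 * m / 8)/4) := binom_subexp n hn _ (by positivity) hcn
  _ = Real.exp (5 * n * m * lam ^ 2 / 32) := by congr 1; ring
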